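/- Let m be an odd positive integer, F = GF(2^m), and let a ∈ F be nonzero. Then the set {x ∈ F : Tr(a·(x·y² + x²·y)) = 0 for all y ∈ F} equals {0, c}, where c is the unique element of F with c³ = a⁻¹ (the cube map being a bijection on F since m is odd). -/

import Mathlib

noncomputable section

namespace DGPaper

/-- The absolute trace `GF(2^m) → 𝔽₂`. -/
def tr {m : ℕ} (x : GaloisField 2 m) : ZMod 2 :=
  Algebra.trace (ZMod 2) (GaloisField 2 m) x

/-- Lift a bit to `ℤ₄`. -/
def lift2 (v : ZMod 2) : ZMod 4 := (v.val : ZMod 4)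

/-- `i^v` for `v ∈ ℤ₄`. -/
def zeta (v : ZMod 4) : ℂ := Complex.I ^ v.val

/-- The field element of `GF(2^m)` associated to a binary `m`-tuple via the basis
`1, ξ, …, ξ^{m-1}`. -/
def fld {m : ℕ} (ξ : GaloisField 2 m) (x : Fin m → ZMod 2) : GaloisField 2 m :=
  ∑ j : Fin m, x j • ξ ^ (j : ℕ)

/-- The binary symmetric matrix `P^t(a)`: for `t = 0` it represents the bilinear form
`(x,y) ↦ Tr(x y a)`, and for `t ≥ 1` the (zero-diagonal) form
`(x,y) ↦ Tr((x y^{2^t} + x^{2^t} y) a)`, in the basis `1, ξ, …, ξ^{m-1}` of `GF(2^m)`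
over `𝔽₂`. -/
def Pmat {m : ℕ} (ξ : GaloisField 2 m) (t : ℕ) (a : GaloisField 2 m) :
    Matrix (Fin m) (Fin m) (ZMod 2) :=
  Matrix.of fun i j =>
    if t = 0 then tr (ξ ^ (i : ℕ) * ξ ^ (j : ℕ) * a)
    else tr ((ξ ^ (i : ℕ) * (ξ ^ (j : ℕ)) ^ (2 ^ t) + (ξ ^ (i : ℕ)) ^ (2 ^ t) * ξ ^ (j : ℕ)) * a)

/-- The quadratic form `x P xᵀ` evaluated in `ℤ₄` (the `0/1` entries of `P` and `x`
being lifted to `ℤ₄`). -/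
def qform {m : ℕ} (P : Matrix (Fin m) (Fin m) (ZMod 2)) (x : Fin m → ZMod 2) : ZMod 4 :=
  ∑ i : Fin m, ∑ j : Fin m, lift2 (x i) * lift2 (P i j) * lift2 (x j)

instance {m : ℕ} : Fintype (GaloisField 2 m) := Fintype.ofFinite _

/-- Frobenius as an algebra equivalence over `ZMod 2`. -/
def frobAlg (m : ℕ) : GaloisField 2 m ≃ₐ[ZMod 2] GaloisField 2 m :=
  { frobeniusEquiv (GaloisField 2 m) 2 with
    commutes' := fun c => by
      show frobenius _ 2 (algebraMap (ZMod 2) _ c) = _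
      rw [frobenius_def, ← map_pow, ZMod.pow_card] }

lemma tr_sq {m : ℕ} (x : GaloisField 2 m) : tr (x ^ 2) = tr x := by
  have := Algebra.trace_eq_of_algEquiv (frobAlg m) x
  simpa [tr, frobAlg, frobeniusEquiv_def, frobenius_def] using this

lemma tr_add {m : ℕ} (x y : GaloisField 2 m) : tr (x + y) = tr x + tr y :=
  map_add (Algebra.trace (ZMod 2) (GaloisField 2 m)) x y

lemma tr_ndg {m : ℕ} (u : GaloisField 2 m)
    (h : ∀ y, tr (u * y) = 0) : u = 0 := by
  have hsep : Algebra.IsSeparable (ZMod 2) (GaloisField 2 m) :=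
    IsGalois.to_isSeparable
  exact (traceForm_nondegenerate (ZMod 2) (GaloisField 2 m)).1 u
    (fun y => by simpa [Algebra.traceForm_apply, tr] using h y)

lemma cube_inj {m : ℕ} (hm : Odd m) :
    Function.Injective (fun x : GaloisField 2 m => x ^ 3) := by
  have hm0 : m ≠ 0 := by rintro rfl; simpa using hm
  have hcard : Nat.card (GaloisField 2 m) = 2 ^ m := GaloisField.card 2 m hm0
  have hcu : Nat.card (GaloisField 2 m)ˣ = 2 ^ m - 1 := by
    rw [Nat.card_units, hcard]
  obtain ⟨k, hk⟩ := hm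
  have h4 : 4 ^ k % 3 = 1 := by rw [Nat.pow_mod]; simp
  have h2m : 2 ^ m % 3 = 2 := by
    subst hk
    rw [pow_succ, pow_mul]
    norm_num [Nat.mul_mod, h4]
  have hle : 1 ≤ 2 ^ m := Nat.one_le_two_pow
  have hnd : ¬ (3 ∣ 2 ^ m - 1) := by omega
  have hcop : (Nat.card (GaloisField 2 m)ˣ).Coprime 3 := by
    rw [hcu]
    exact (Nat.Coprime.symm ((Nat.Prime.coprime_iff_not_dvd Nat.prime_three).mpr hnd))
  intro x y h
  simp only at h
  rcases eq_or_ne y 0 with rfl | hy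
  · have hx3 : x ^ 3 = 0 := by simpa using h
    exact (pow_eq_zero_iff (n := 3) (by norm_num)).mp hx3
  · have hx : x ≠ 0 := by
      intro hx; apply hy
      rw [hx] at h
      have hy3 : y ^ 3 = 0 := by simpa using h.symm
      exact (pow_eq_zero_iff (n := 3) (by norm_num)).mp hy3
    have : (Units.mk0 x hx) ^ 3 = (Units.mk0 y hy) ^ 3 := by
      ext; push_cast; simpa using h
    have := (powCoprime hcop).injective this
    simpa [Units.ext_iff] using this

/-- For odd `m` and nonzero `a ∈ GF(2^m)`, the radical
`{x : Tr(a (x y² + x² y)) = 0 for all y}` of the bilinear form represented by `P¹(a)`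
equals `{0, c}`, where `c` is the unique element with `c³ = a⁻¹` (the cube map being a
bijection since `m` is odd). -/
theorem radical_of_P1_form_eq_pair
    (m : ℕ) (hm : Odd m) (a : GaloisField 2 m) (ha : a ≠ 0) :
    (∃! c : GaloisField 2 m, c ^ 3 = a⁻¹) ∧
      ∀ c : GaloisField 2 m, c ^ 3 = a⁻¹ →
        {x : GaloisField 2 m |
            ∀ y : GaloisField 2 m, tr (a * (x * y ^ 2 + x ^ 2 * y)) = 0} =
          {0, c} := by
  have hinj := cube_inj (m := m) hm
  have hsurj : Function.Surjective (fun x : GaloisField 2 m => x ^ 3) :=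
    Finite.surjective_of_injective hinj
  obtain ⟨c₀, hc₀⟩ := hsurj a⁻¹
  refine ⟨⟨c₀, hc₀, fun y hy => hinj (hy.trans hc₀.symm)⟩, ?_⟩
  intro c hc
  have hc0 : c ≠ 0 := by
    intro h; rw [h] at hc
    exact inv_ne_zero ha (by simpa using hc.symm)
  have hac : a * c ^ 3 = 1 := by rw [hc, mul_inv_cancel₀ ha]
  have mem_c : ∀ y, tr (a * (c * y ^ 2 + c ^ 2 * y)) = 0 := by
    intro y
    have e : a * (c * y ^ 2 + c ^ 2 * y) = (a * c ^ 2 * y) ^ 2 + a * c ^ 2 * y := by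
      linear_combination (-(a * c * y ^ 2)) * hac
    rw [e, tr_add, tr_sq]
    exact CharTwo.add_self_eq_zero _
  ext x
  simp only [Set.mem_setOf_eq, Set.mem_insert_iff, Set.mem_singleton_iff]
  constructor
  · intro hx
    rcases eq_or_ne x 0 with rfl | hx0
    · exact Or.inl rfl
    · right
      obtain ⟨w, hw⟩ := surjective_frobenius (GaloisField 2 m) 2 (a * x)
      have hw2 : w ^ 2 = a * x := hw
      have key : ∀ y, tr ((w + a * x ^ 2) * y) = 0 := by
        intro y
        have e1 : (w + a * x ^ 2) * y = w * y + a * x ^ 2 * y := by ring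
        rw [e1, tr_add, ← tr_sq (w * y)]
        have e2 : (w * y) ^ 2 = a * x * y ^ 2 := by rw [mul_pow, hw2]
        rw [e2, ← tr_add]
        have e3 : a * x * y ^ 2 + a * x ^ 2 * y = a * (x * y ^ 2 + x ^ 2 * y) := by ring
        rw [e3]; exact hx y
      have hw0 : w + a * x ^ 2 = 0 := tr_ndg _ key
      have hweq : w = a * x ^ 2 :=
        (eq_neg_of_add_eq_zero_left hw0).trans (CharTwo.neg_eq _)
      have h4 : a * x = a ^ 2 * x ^ 4 := by rw [← hw2, hweq]; ring
      have h4' : a * x * (a * x ^ 3) = a * x * 1 := by linear_combination -h4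
      have h5 : a * x ^ 3 = 1 := mul_left_cancel₀ (mul_ne_zero ha hx0) h4'
      have hx3 : x ^ 3 = a⁻¹ := eq_inv_of_mul_eq_one_right h5
      exact hinj (hx3.trans hc.symm)
  · rintro (rfl | rfl)
    · intro y; simp [tr]
    · exact mem_c
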